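/- Let (L,≤) be a complete lattice equipped with functions |_α : L → L for each α < κ satisfying B1: (x|_α)|_β = x|_β for β ≤ α; B2: x ≤ y implies x|_α ≤ y|_α; B3: x = ⨆_{α<κ} x|_α; B4: if x_i|_α = y for all i in a nonempty I, then (⨆ x_i)|_α = y. Define x ⊑_α y iff x|_α ≤ y|_α and x|_β = y|_β for all β < α. Then L with these preorders is a model satisfying A1–A6, and x|_α coincides with the element given by A3 (i.e., x|_α =_α x and x ⊑_α z implies x|_α ≤ z). -/

import Mathlib

/-- The preorder ⊑_α defined from the restriction operations (condition D). -/
def rOf {L : Type*} [CompleteLattice L] (res : Ordinal → L → L)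
    (α : Ordinal) (x y : L) : Prop :=
  res α x ≤ res α y ∧ ∀ β < α, res β x = res β y

/-- a complete lattice with restriction operations |_α satisfying
B1–B4, with preorders ⊑_α defined by D, is a model satisfying A1–A6, and the given
|_α coincides with the element given by A3 (condition C). -/
theorem model_of_B_axioms
    {κ : Ordinal} (hκ : Order.IsSuccLimit κ) {L : Type*} [CompleteLattice L]
    (res : Ordinal → L → L)
    (B1 : ∀ α < κ, ∀ β ≤ α, ∀ x : L, res β (res α x) = res β x)
    (B2 : ∀ α < κ, ∀ x y : L, x ≤ y → res α x ≤ res α y)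
    (B3 : ∀ x : L, x = sSup ((fun α => res α x) '' Set.Iio κ))
    (B4 : ∀ α < κ, ∀ (X : Set L) (y : L), X.Nonempty →
        (∀ x ∈ X, res α x = y) → res α (sSup X) = y) :
    -- the relations ⊑_α are preorders
    (∀ α < κ, ∀ x : L, rOf res α x x) ∧
    (∀ α < κ, ∀ x y z : L, rOf res α x y → rOf res α y z → rOf res α x z) ∧
    -- A1
    (∀ α β : Ordinal, α < β → β < κ → ∀ x y : L,
        rOf res β x y → rOf res α x y ∧ rOf res α y x) ∧
    -- A2
    (∀ x y : L, (∀ α < κ, rOf res α x y ∧ rOf res α y x) → x = y) ∧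
    -- A3 together with condition C
    (∀ α < κ, ∀ x : L, (rOf res α x (res α x) ∧ rOf res α (res α x) x) ∧
        ∀ z : L, rOf res α x z → res α x ≤ z) ∧
    -- A4
    (∀ α < κ, ∀ (X : Set L) (y : L), X.Nonempty →
        (∀ x ∈ X, rOf res α x y ∧ rOf res α y x) →
        rOf res α (sSup X) y ∧ rOf res α y (sSup X)) ∧
    -- A5
    (∀ α < κ, ∀ x y : L, x ≤ y → res α x ≤ res α y) ∧
    -- A6
    (∀ α < κ, ∀ x y : L, x ≤ y → (∀ β < α, rOf res β x y ∧ rOf res β y x) →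
        rOf res α x y) := by

  -- res α x ≤ x, since x is the sup of its restrictions
  have hle : ∀ α < κ, ∀ x : L, res α x ≤ x := by
    intro α hα x
    conv_rhs => rw [B3 x]
    exact le_sSup ⟨α, hα, rfl⟩
  -- A1 helper: rOf β x y → along with β relations, res α x = res α y for α < β
  refine ⟨?_, ?_, ?_, ?_, ?_, ?_, ?_, ?_⟩
  · intro α hα x; exact ⟨le_rfl, fun β _ => rfl⟩
  · rintro α hα x y z ⟨h1, h2⟩ ⟨h3, h4⟩
    exact ⟨h1.trans h3, fun β hβ => (h2 β hβ).trans (h4 β hβ)⟩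
  · rintro α β hαβ hβκ x y ⟨h1, h2⟩
    have e : res α x = res α y := h2 α hαβ
    constructor
    · exact ⟨e.le, fun γ hγ => h2 γ (hγ.trans hαβ)⟩
    · exact ⟨e.ge, fun γ hγ => (h2 γ (hγ.trans hαβ)).symm⟩
  · intro x y h
    rw [B3 x, B3 y]
    congr 1
    ext z
    constructor
    · rintro ⟨α, hα, rfl⟩
      exact ⟨α, hα, (le_antisymm (h α hα).1.1 (h α hα).2.1).symm⟩
    · rintro ⟨α, hα, rfl⟩
      exact ⟨α, hα, le_antisymm (h α hα).1.1 (h α hα).2.1⟩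
  · intro α hα x
    have key : ∀ β ≤ α, res β (res α x) = res β x := fun β hβ => B1 α hα β hβ x
    constructor
    · constructor
      · exact ⟨(key α le_rfl).ge, fun β hβ => (key β hβ.le).symm⟩
      · exact ⟨(key α le_rfl).le, fun β hβ => key β hβ.le⟩
    · rintro z ⟨h1, _⟩
      exact h1.trans (hle α hα z)
  · intro α hα X y hne h
    have e : ∀ β ≤ α, res β (sSup X) = res β y := by
      intro β hβ
      refine B4 β (lt_of_le_of_lt hβ hα) X (res β y) hne fun x hx => ?_
      rcases lt_or_eq_of_le hβ with hβ' | rfl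
      · exact (h x hx).1.2 β hβ'
      · exact le_antisymm (h x hx).1.1 (h x hx).2.1
    constructor
    · exact ⟨(e α le_rfl).le, fun β hβ => e β hβ.le⟩
    · exact ⟨(e α le_rfl).ge, fun β hβ => (e β hβ.le).symm⟩
  · intro α hα x y h; exact B2 α hα x y h
  · intro α hα x y hxy h
    exact ⟨B2 α hα x y hxy, fun β hβ => le_antisymm (h β hβ).1.1 (h β hβ).2.1⟩
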